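/- Let λ ∈ ℝ, ρ ∈ (0,∞), and let a : [λ−ρ, λ+ρ] → ℝ be measurable with a(λ) finite such that |a(λ+t) − a(λ)| ≤ ω(|t|) for all 0 < |t| ≤ ρ, where ω : (0,ρ] → [0,∞) and t ↦ ω(t)/t is integrable over (0,ρ). Then the principal value p.v.∫_{λ−ρ}^{λ+ρ} a(τ)/(τ−λ) dτ exists, and for every ε > 0 and each choice of sign one has | ∫_{λ−ρ}^{λ+ρ} a(τ)/(τ−λ ∓ iε) dτ − p.v.∫_{λ−ρ}^{λ+ρ} a(τ)/(τ−λ) dτ ∓ iπ a(λ) | ≤ ∫_0^ρ (2ε/√(t²+ε²)) · (ω(t)/t) dt + (π − 2 arctan(ρ/ε)) |a(λ)|. -/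

import Mathlib

open MeasureTheory Filter intervalIntegral Real Set

lemma den_ne (s ε t : ℝ) (hε : 0 < ε) (hs : s = 1 ∨ s = -1) :
    (t : ℂ) - s * ε * Complex.I ≠ 0 := by
  intro h
  have : ((t : ℂ) - s * ε * Complex.I).im = 0 := by rw [h]; simp
  simp only [Complex.sub_im, Complex.mul_im, Complex.ofReal_im, Complex.I_im, Complex.mul_re,
    Complex.ofReal_re, Complex.I_re] at this
  rcases hs with rfl | rfl <;> simp at this <;> linarith

lemma norm_den (s ε t : ℝ) (hs : s = 1 ∨ s = -1) :
    ‖(t : ℂ) - s * ε * Complex.I‖ = Real.sqrt (t ^ 2 + ε ^ 2) := by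
  rw [Complex.norm_def, Complex.normSq_apply]
  have h1 : ((t : ℂ) - s * ε * Complex.I).re = t := by simp
  have h2 : ((t : ℂ) - s * ε * Complex.I).im = -(s * ε) := by simp
  rw [h1, h2]
  rcases hs with rfl | rfl <;> ring_nf

lemma int_inv_sq_add (ε ρ : ℝ) (hε : 0 < ε) :
    ∫ t in (-ρ)..ρ, 1 / (t ^ 2 + ε ^ 2) = 2 / ε * Real.arctan (ρ / ε) := by
  have h : ∀ t : ℝ, HasDerivAt (fun u : ℝ => ε⁻¹ * Real.arctan (u / ε))
      (1 / (t ^ 2 + ε ^ 2)) t := by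
    intro t
    have h1 : HasDerivAt (fun u : ℝ => u / ε) (1 / ε) t := by simpa using (hasDerivAt_id t).div_const ε
    have h2 := (Real.hasDerivAt_arctan (t / ε)).comp t h1
    have h3 := h2.const_mul ε⁻¹
    refine h3.congr_deriv ?_
    field_simp
    ring
  rw [intervalIntegral.integral_eq_sub_of_hasDerivAt (fun t _ => h t) ?cont]
  case cont =>
    apply Continuous.intervalIntegrable
    have : ∀ t : ℝ, t ^ 2 + ε ^ 2 ≠ 0 := fun t => by positivity
    exact continuous_const.div (by continuity) this
  rw [neg_div, Real.arctan_neg]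
  ring

lemma int_t_div_sq_add (ε ρ : ℝ) (hε : 0 < ε) :
    ∫ t in (-ρ)..ρ, t / (t ^ 2 + ε ^ 2) = 0 := by
  have hne : ∀ t : ℝ, t ^ 2 + ε ^ 2 ≠ 0 := fun t => by positivity
  have h : ∀ t : ℝ, HasDerivAt (fun u : ℝ => Real.log (u ^ 2 + ε ^ 2) / 2)
      (t / (t ^ 2 + ε ^ 2)) t := by
    intro t
    have h1 : HasDerivAt (fun u : ℝ => u ^ 2 + ε ^ 2) (2 * t) t := by
      simpa using ((hasDerivAt_pow 2 t).add_const (ε ^ 2))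
    have h2 := (Real.hasDerivAt_log (hne t)).comp t h1
    have h3 := h2.div_const 2
    refine h3.congr_deriv ?_
    field_simp
  rw [intervalIntegral.integral_eq_sub_of_hasDerivAt (fun t _ => h t) ?cont]
  case cont =>
    apply Continuous.intervalIntegrable
    exact continuous_id.div (by continuity) hne
  simp [neg_pow]

lemma J_eval (s ε ρ : ℝ) (hε : 0 < ε) (hs : s = 1 ∨ s = -1) :
    ∫ t in (-ρ)..ρ, ((t : ℂ) - s * ε * Complex.I)⁻¹
      = 2 * s * Real.arctan (ρ / ε) * Complex.I := by
  have hne : ∀ t : ℝ, t ^ 2 + ε ^ 2 ≠ 0 := fun t => by positivity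
  have key : ∀ t : ℝ, ((t : ℂ) - s * ε * Complex.I)⁻¹
      = ((t / (t ^ 2 + ε ^ 2) : ℝ) : ℂ)
        + (s : ℂ) * ε * Complex.I * ((1 / (t ^ 2 + ε ^ 2) : ℝ) : ℂ) := by
    intro t
    have h0 := den_ne s ε t hε hs
    have h1 : (t : ℂ) ^ 2 + (ε : ℂ) ^ 2 ≠ 0 := by
      have h2 : ((t : ℂ) ^ 2 + (ε : ℂ) ^ 2) = ((t ^ 2 + ε ^ 2 : ℝ) : ℂ) := by push_cast; ring
      rw [h2]; exact_mod_cast hne t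
    refine inv_eq_of_mul_eq_one_right ?_
    rcases hs with rfl | rfl <;> push_cast <;> field_simp <;>
      linear_combination (-(ε : ℂ) ^ 2) * Complex.I_sq
  have c1 : Continuous fun t : ℝ => ((t / (t ^ 2 + ε ^ 2) : ℝ) : ℂ) := by
    exact Complex.continuous_ofReal.comp (continuous_id.div (by continuity) hne)
  have c2 : Continuous fun t : ℝ => ((1 / (t ^ 2 + ε ^ 2) : ℝ) : ℂ) := by
    exact Complex.continuous_ofReal.comp (continuous_const.div (by continuity) hne)
  calc ∫ t in (-ρ)..ρ, ((t : ℂ) - s * ε * Complex.I)⁻¹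
      = ∫ t in (-ρ)..ρ, (((t / (t ^ 2 + ε ^ 2) : ℝ) : ℂ)
          + (s : ℂ) * ε * Complex.I * ((1 / (t ^ 2 + ε ^ 2) : ℝ) : ℂ)) := by
        exact intervalIntegral.integral_congr fun t _ => key t
    _ = (∫ t in (-ρ)..ρ, ((t / (t ^ 2 + ε ^ 2) : ℝ) : ℂ))
          + (s : ℂ) * ε * Complex.I * ∫ t in (-ρ)..ρ, ((1 / (t ^ 2 + ε ^ 2) : ℝ) : ℂ) := by
        rw [intervalIntegral.integral_add (c1.intervalIntegrable _ _)
          (g := fun t : ℝ => (s : ℂ) * ε * Complex.I * ((1 / (t ^ 2 + ε ^ 2) : ℝ) : ℂ)) (((continuous_const.mul c2)).intervalIntegrable _ _),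
          intervalIntegral.integral_const_mul]
    _ = ((∫ t in (-ρ)..ρ, t / (t ^ 2 + ε ^ 2) : ℝ) : ℂ)
          + (s : ℂ) * ε * Complex.I * ((∫ t in (-ρ)..ρ, 1 / (t ^ 2 + ε ^ 2) : ℝ) : ℂ) := by
        rw [intervalIntegral.integral_ofReal, intervalIntegral.integral_ofReal]
    _ = 2 * s * Real.arctan (ρ / ε) * Complex.I := by
        rw [int_t_div_sq_add ε ρ hε, int_inv_sq_add ε ρ hε]
        push_cast
        have : (ε : ℂ) ≠ 0 := by exact_mod_cast hε.ne'
        field_simp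
        ring

lemma S_eq (lam ρ : ℝ) : {τ : ℝ | 0 < |τ - lam| ∧ |τ - lam| < ρ}
    = Ioo (lam - ρ) lam ∪ Ioo lam (lam + ρ) := by
  ext τ
  simp only [Set.mem_setOf_eq, Set.mem_union, Set.mem_Ioo, abs_pos, sub_ne_zero, abs_lt]
  constructor
  · rintro ⟨hne, h1, h2⟩
    rcases lt_or_gt_of_ne hne with h | h
    · exact Or.inl ⟨by linarith, h⟩
    · exact Or.inr ⟨h, by linarith⟩
  · rintro (⟨h1, h2⟩ | ⟨h1, h2⟩)
    · exact ⟨ne_of_lt h2, by linarith, by linarith⟩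
    · exact ⟨ne_of_gt h1, by linarith, by linarith⟩

lemma A_eq (lam ρ r : ℝ) (hr : 0 ≤ r) : {τ : ℝ | r < |τ - lam| ∧ |τ - lam| < ρ}
    = Ioo (lam - ρ) (lam - r) ∪ Ioo (lam + r) (lam + ρ) := by
  ext τ
  simp only [Set.mem_setOf_eq, Set.mem_union, Set.mem_Ioo, abs_lt]
  constructor
  · rintro ⟨h0, h1, h2⟩
    rcases abs_cases (τ - lam) with ⟨he, _⟩ | ⟨he, _⟩
    · exact Or.inr ⟨by rw [he] at h0; linarith, by linarith⟩
    · exact Or.inl ⟨by linarith, by rw [he] at h0; linarith⟩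
  · rintro (⟨h1, h2⟩ | ⟨h1, h2⟩)
    · exact ⟨by rw [abs_sub_comm, abs_of_pos (by linarith)]; linarith,
        by linarith, by linarith⟩
    · exact ⟨by rw [abs_of_pos (by linarith)]; linarith, by linarith, by linarith⟩

lemma D_int (lam ρ : ℝ) (hρ : 0 < ρ) (ω : ℝ → ℝ)
    (hωint : IntegrableOn (fun t => ω t / t) (Set.Ioc (0:ℝ) ρ)) :
    IntegrableOn (fun τ => ω |τ - lam| / |τ - lam|)
      (Ioo (lam - ρ) lam ∪ Ioo lam (lam + ρ)) := by
  have hq : IntervalIntegrable (fun t => ω t / t) volume 0 ρ :=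
    (intervalIntegrable_iff_integrableOn_Ioc_of_le hρ.le).2 hωint
  apply IntegrableOn.union
  · have h1 := (hq.comp_sub_left lam).symm
    have h1' : IntervalIntegrable (fun x => ω (lam - x) / (lam - x)) volume (lam - ρ) lam := by
      simpa using h1
    have h2 := (intervalIntegrable_iff_integrableOn_Ioc_of_le
      (by linarith : lam - ρ ≤ lam)).1 h1'
    refine ((h2.mono_set Ioo_subset_Ioc_self).congr_fun ?_ measurableSet_Ioo)
    intro τ hτ
    simp only [Set.mem_Ioo] at hτ
    dsimp only
    rw [abs_sub_comm, abs_of_pos (by linarith)]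
  · have h1 := hq.comp_sub_right lam
    have h1' : IntervalIntegrable (fun x => ω (x - lam) / (x - lam)) volume lam (lam + ρ) := by
      have e1 : (0:ℝ) + lam = lam := by ring
      have e2 : ρ + lam = lam + ρ := by ring
      rwa [e1, e2] at h1
    have h2 := (intervalIntegrable_iff_integrableOn_Ioc_of_le
      (by linarith : lam ≤ lam + ρ)).1 h1'
    refine ((h2.mono_set Ioo_subset_Ioc_self).congr_fun ?_ measurableSet_Ioo)
    intro τ hτ
    simp only [Set.mem_Ioo] at hτ
    dsimp only
    rw [abs_of_pos (by linarith)]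

/-- **Plemelj–Sokhotski type estimate.**
Let `λ ∈ ℝ`, `ρ ∈ (0,∞)`, and let `a : [λ−ρ, λ+ρ] → ℝ` be measurable such that
`|a(λ+t) − a(λ)| ≤ ω(|t|)` for all `0 < |t| ≤ ρ`, where `t ↦ ω(t)/t` is integrable over `(0,ρ)`.
Then the principal value `p.v.∫_{λ−ρ}^{λ+ρ} a(τ)/(τ−λ) dτ` exists, and for every `ε > 0` and each
choice of sign `s = ±1` one has
`| ∫_{λ−ρ}^{λ+ρ} a(τ)/(τ−λ − s i ε) dτ − p.v.∫_{λ−ρ}^{λ+ρ} a(τ)/(τ−λ) dτ − s iπ a(λ) |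
  ≤ ∫_0^ρ (2ε/√(t²+ε²)) (ω(t)/t) dt + (π − 2 arctan(ρ/ε)) |a(λ)|`. -/
theorem stmt0 (lam ρ : ℝ) (hρ : 0 < ρ)
    (a : ℝ → ℝ) (ha : Measurable a)
    (ω : ℝ → ℝ) (hω0 : ∀ t ∈ Set.Ioc (0:ℝ) ρ, 0 ≤ ω t)
    (hωint : IntegrableOn (fun t => ω t / t) (Set.Ioc (0:ℝ) ρ))
    (hbound : ∀ t : ℝ, 0 < |t| → |t| ≤ ρ → |a (lam + t) - a lam| ≤ ω |t|) :
    ∃ P : ℂ,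
      Tendsto (fun r : ℝ =>
          ∫ τ in {τ : ℝ | r < |τ - lam| ∧ |τ - lam| < ρ}, (a τ : ℂ) / ((τ : ℂ) - lam))
        (nhdsWithin 0 (Set.Ioi 0)) (nhds P) ∧
      ∀ ε : ℝ, 0 < ε → ∀ s : ℝ, s = 1 ∨ s = -1 →
        ‖(∫ τ in (lam - ρ)..(lam + ρ), (a τ : ℂ) / ((τ : ℂ) - lam - s * ε * Complex.I))
            - P - s * Real.pi * (a lam) * Complex.I‖
          ≤ (∫ t in Set.Ioc (0:ℝ) ρ, (2 * ε / Real.sqrt (t ^ 2 + ε ^ 2)) * (ω t / t))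
            + (Real.pi - 2 * Real.arctan (ρ / ε)) * |a lam| := by
  set S : Set ℝ := {τ : ℝ | 0 < |τ - lam| ∧ |τ - lam| < ρ} with hSdef
  have hSu : S = Ioo (lam - ρ) lam ∪ Ioo lam (lam + ρ) := S_eq lam ρ
  have hSm : MeasurableSet S := by rw [hSu]; exact measurableSet_Ioo.union measurableSet_Ioo
  set D : ℝ → ℝ := fun τ => ω |τ - lam| / |τ - lam| with hDdef
  have hD : IntegrableOn D S := by rw [hSu]; exact D_int lam ρ hρ ω hωint
  have hmemS : ∀ τ ∈ S, |τ - lam| ∈ Set.Ioc (0:ℝ) ρ := fun τ h => ⟨h.1, h.2.le⟩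
  have hDpos : ∀ τ ∈ S, 0 ≤ D τ := fun τ h => div_nonneg (hω0 _ (hmemS τ h)) (abs_nonneg _)
  have habs : ∀ τ ∈ S, |a τ - a lam| ≤ ω |τ - lam| := by
    intro τ h
    have := hbound (τ - lam) h.1 h.2.le
    simpa using this
  set f : ℝ → ℂ := fun τ => ((a τ - a lam : ℝ) : ℂ) / ((τ : ℂ) - lam) with hfdef
  have hnorm1 : ∀ x : ℝ, ‖((x : ℝ) : ℂ)‖ = |x| := fun x => by
    rw [Complex.norm_real, Real.norm_eq_abs]
  have hfnorm : ∀ τ ∈ S, ‖f τ‖ ≤ D τ := by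
    intro τ h
    have h0 : (0:ℝ) < |τ - lam| := h.1
    rw [hfdef]
    dsimp only
    rw [norm_div]
    have e2 : ‖(τ:ℂ) - lam‖ = |τ - lam| := by
      rw [← Complex.ofReal_sub, hnorm1]
    rw [hnorm1, e2, hDdef]
    exact div_le_div_of_nonneg_right (habs τ h) h0.le
  have hfm : Measurable f := by
    apply Measurable.div
    · exact Complex.measurable_ofReal.comp (ha.sub measurable_const)
    · exact (Complex.measurable_ofReal.comp measurable_id).sub measurable_const
  have hfint : IntegrableOn f S := by
    refine Integrable.mono' hD (hfm.aestronglyMeasurable.restrict) ?_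
    rw [ae_restrict_iff' hSm]
    exact ae_of_all _ hfnorm
  set P : ℂ := ∫ τ in S, f τ with hPdef
  have hAm : ∀ r : ℝ, MeasurableSet {τ : ℝ | r < |τ - lam| ∧ |τ - lam| < ρ} := by
    intro r
    have he : {τ : ℝ | r < |τ - lam| ∧ |τ - lam| < ρ}
        = (fun τ : ℝ => |τ - lam|) ⁻¹' (Set.Ioo r ρ) := rfl
    rw [he]
    exact ((measurable_id.sub_const lam).abs) measurableSet_Ioo
  have hsub : ∀ r : ℝ, 0 < r → {τ : ℝ | r < |τ - lam| ∧ |τ - lam| < ρ} ⊆ S :=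
    fun r hr τ h => ⟨lt_trans hr h.1, h.2⟩
  refine ⟨P, ?_, ?_⟩
  · -- principal value
    have key0 : ∀ r ∈ Set.Ioo (0:ℝ) ρ,
        (∫ τ in {τ : ℝ | r < |τ - lam| ∧ |τ - lam| < ρ}, (a τ : ℂ) / ((τ : ℂ) - lam))
          = ∫ τ in {τ : ℝ | r < |τ - lam| ∧ |τ - lam| < ρ}, f τ := by
      rintro r ⟨hr0, hrρ⟩
      have hAe : {τ : ℝ | r < |τ - lam| ∧ |τ - lam| < ρ}
          = Ioo (lam - ρ) (lam - r) ∪ Ioo (lam + r) (lam + ρ) := A_eq lam ρ r hr0.le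
      set g0 : ℝ → ℂ := fun τ => ((a lam : ℝ) : ℂ) / ((τ : ℂ) - lam) with hg0def
      have hptw : ∀ τ : ℝ, (a τ : ℂ) / ((τ : ℂ) - lam) = f τ + g0 τ := by
        intro τ
        rw [hfdef, hg0def]
        dsimp only
        rw [← add_div]
        push_cast
        ring
      have hcont : ∀ u v : ℝ, lam ∉ Icc u v → IntegrableOn g0 (Ioo u v) := by
        intro u v huv
        refine (ContinuousOn.integrableOn_Icc ?_).mono_set Ioo_subset_Icc_self
        refine ContinuousOn.div continuousOn_const
          ((Complex.continuous_ofReal.sub continuous_const).continuousOn) ?_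
        intro x hx
        refine sub_ne_zero.2 ?_
        have : x ≠ lam := fun h => huv (h ▸ hx)
        exact_mod_cast this
      have hg0right : IntegrableOn g0 (Ioo (lam + r) (lam + ρ)) := by
        apply hcont
        intro h
        rcases h with ⟨h1, _⟩
        linarith
      have hg0left : IntegrableOn g0 (Ioo (lam - ρ) (lam - r)) := by
        apply hcont
        intro h
        rcases h with ⟨_, h2⟩
        linarith
      have hrepr : ∀ τ : ℝ, g0 τ = ((a lam / (τ - lam) : ℝ) : ℂ) := by
        intro τ
        rw [hg0def]
        push_cast
        ring
      have hval_right : ∫ τ in Ioo (lam + r) (lam + ρ), g0 τ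
          = ((a lam * Real.log (ρ / r) : ℝ) : ℂ) := by
        rw [← integral_Ioc_eq_integral_Ioo,
          ← intervalIntegral.integral_of_le (by linarith : lam + r ≤ lam + ρ),
          intervalIntegral.integral_congr (fun τ _ => hrepr τ),
          intervalIntegral.integral_ofReal]
        norm_cast
        simp_rw [div_eq_mul_inv]
        rw [intervalIntegral.integral_const_mul,
          intervalIntegral.integral_comp_sub_right (fun t => t⁻¹) lam,
          add_sub_cancel_left, add_sub_cancel_left,
          integral_inv (Set.notMem_uIcc_of_lt hr0 hρ), div_eq_mul_inv]
      have hval_left : ∫ τ in Ioo (lam - ρ) (lam - r), g0 τ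
          = ((a lam * Real.log ((-r) / (-ρ)) : ℝ) : ℂ) := by
        rw [← integral_Ioc_eq_integral_Ioo,
          ← intervalIntegral.integral_of_le (by linarith : lam - ρ ≤ lam - r),
          intervalIntegral.integral_congr (fun τ _ => hrepr τ),
          intervalIntegral.integral_ofReal]
        norm_cast
        simp_rw [div_eq_mul_inv]
        rw [intervalIntegral.integral_const_mul,
          intervalIntegral.integral_comp_sub_right (fun t => t⁻¹) lam]
        have e1 : lam - ρ - lam = -ρ := by ring
        have e2 : lam - r - lam = -r := by ring
        rw [e1, e2, integral_inv (Set.notMem_uIcc_of_gt (by linarith) (by linarith)),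
          div_eq_mul_inv]
      have hdisj : Disjoint (Ioo (lam - ρ) (lam - r)) (Ioo (lam + r) (lam + ρ)) := by
        rw [Set.disjoint_left]
        rintro x ⟨_, h2⟩ ⟨h3, _⟩
        linarith
      have hzero : ∫ τ in {τ : ℝ | r < |τ - lam| ∧ |τ - lam| < ρ}, g0 τ = 0 := by
        rw [hAe, setIntegral_union hdisj measurableSet_Ioo hg0left hg0right,
          hval_left, hval_right]
        rw [neg_div_neg_eq]
        rw [← Complex.ofReal_add, ← mul_add,
          Real.log_div (ne_of_gt hr0) (ne_of_gt hρ),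
          Real.log_div (ne_of_gt hρ) (ne_of_gt hr0)]
        norm_num
      have hAint : IntegrableOn f {τ : ℝ | r < |τ - lam| ∧ |τ - lam| < ρ} :=
        hfint.mono_set (hsub r hr0)
      have hg0A : IntegrableOn g0 {τ : ℝ | r < |τ - lam| ∧ |τ - lam| < ρ} := by
        rw [hAe]
        exact hg0left.union hg0right
      calc ∫ τ in {τ : ℝ | r < |τ - lam| ∧ |τ - lam| < ρ}, (a τ : ℂ) / ((τ : ℂ) - lam)
          = ∫ τ in {τ : ℝ | r < |τ - lam| ∧ |τ - lam| < ρ}, (f τ + g0 τ) := by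
            exact setIntegral_congr_fun (hAm r) fun τ _ => hptw τ
        _ = (∫ τ in {τ : ℝ | r < |τ - lam| ∧ |τ - lam| < ρ}, f τ)
              + ∫ τ in {τ : ℝ | r < |τ - lam| ∧ |τ - lam| < ρ}, g0 τ :=
            MeasureTheory.integral_add hAint hg0A
        _ = ∫ τ in {τ : ℝ | r < |τ - lam| ∧ |τ - lam| < ρ}, f τ := by
            rw [hzero, add_zero]
    have htend : Tendsto (fun r : ℝ =>
        ∫ τ, ({τ : ℝ | r < |τ - lam| ∧ |τ - lam| < ρ}).indicator f τ)
        (nhdsWithin 0 (Set.Ioi 0)) (nhds (∫ τ, S.indicator f τ)) := by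
      apply MeasureTheory.tendsto_integral_filter_of_dominated_convergence (S.indicator D)
      · exact Eventually.of_forall fun r =>
          (hfm.indicator (hAm r)).aestronglyMeasurable
      · filter_upwards [self_mem_nhdsWithin] with r hr
        apply ae_of_all
        intro τ
        by_cases hτ : τ ∈ {τ : ℝ | r < |τ - lam| ∧ |τ - lam| < ρ}
        · rw [Set.indicator_of_mem hτ, Set.indicator_of_mem (hsub r hr hτ)]
          exact hfnorm τ (hsub r hr hτ)
        · rw [Set.indicator_of_notMem hτ, norm_zero]
          exact Set.indicator_nonneg (fun x hx => hDpos x hx) τ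
      · exact (integrable_indicator_iff hSm).2 hD
      · apply ae_of_all
        intro τ
        by_cases hτ : τ ∈ S
        · have hco : (fun _ : ℝ => S.indicator f τ) =ᶠ[nhdsWithin 0 (Set.Ioi 0)]
              fun r : ℝ => ({τ : ℝ | r < |τ - lam| ∧ |τ - lam| < ρ}).indicator f τ := by
            filter_upwards [Ioo_mem_nhdsGT_of_mem (⟨le_refl (0:ℝ), hτ.1⟩ :
              (0:ℝ) ∈ Set.Ico 0 |τ - lam|)] with r hr
            have hmem : τ ∈ {x : ℝ | r < |x - lam| ∧ |x - lam| < ρ} := ⟨hr.2, hτ.2⟩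
            rw [Set.indicator_of_mem hτ, Set.indicator_of_mem hmem]
          exact Tendsto.congr' hco tendsto_const_nhds
        · have hco : (fun _ : ℝ => S.indicator f τ) =ᶠ[nhdsWithin 0 (Set.Ioi 0)]
              fun r : ℝ => ({τ : ℝ | r < |τ - lam| ∧ |τ - lam| < ρ}).indicator f τ := by
            filter_upwards [self_mem_nhdsWithin] with r hr
            have hn : τ ∉ {τ : ℝ | r < |τ - lam| ∧ |τ - lam| < ρ} := fun h => hτ (hsub r hr h)
            rw [Set.indicator_of_notMem hτ, Set.indicator_of_notMem hn]
          exact Tendsto.congr' hco tendsto_const_nhds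
    rw [MeasureTheory.integral_indicator hSm] at htend
    simp_rw [MeasureTheory.integral_indicator (hAm _)] at htend
    refine Tendsto.congr' ?_ htend
    filter_upwards [Ioo_mem_nhdsGT_of_mem (⟨le_refl (0:ℝ), hρ⟩ : (0:ℝ) ∈ Set.Ico 0 ρ)] with r hr
    exact (key0 r hr).symm
  · intro ε hε s hs
    have hsabs : |s| = 1 := by rcases hs with rfl | rfl <;> norm_num
    have hle : lam - ρ ≤ lam + ρ := by linarith
    -- the Ioc interval and S agree a.e.
    have hae : Set.Ioc (lam - ρ) (lam + ρ) =ᵐ[volume] S := by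
      rw [MeasureTheory.ae_eq_set]
      constructor
      · apply measure_mono_null
          (?_ : Set.Ioc (lam - ρ) (lam + ρ) \ S ⊆ ({lam, lam + ρ} : Set ℝ))
        · exact ((Set.finite_singleton (lam + ρ)).insert lam).measure_zero volume
        · rintro τ ⟨hτ, hτn⟩
          rcases hτ with ⟨hτ1, hτ2⟩
          by_cases hτl : τ = lam
          · exact Or.inl hτl
          · right
            have h1 : 0 < |τ - lam| := abs_pos.2 (sub_ne_zero.2 hτl)
            have h2 : ¬ |τ - lam| < ρ := fun hc => hτn ⟨h1, hc⟩
            push_neg at h2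
            rcases abs_cases (τ - lam) with ⟨he, _⟩ | ⟨he, hneg⟩
            · refine Set.mem_singleton_iff.2 ?_
              rw [he] at h2
              linarith
            · exfalso
              rw [he] at h2
              linarith
      · have hsub2 : S ⊆ Set.Ioc (lam - ρ) (lam + ρ) := by
          intro τ h
          have := abs_lt.1 h.2
          exact ⟨by linarith [this.1], by linarith [this.2]⟩
        rw [Set.diff_eq_empty.2 hsub2]
        exact measure_empty
    -- facts about the denominator
    have hzform : ∀ τ : ℝ, (τ : ℂ) - lam - s * ε * Complex.I
        = ((τ - lam : ℝ) : ℂ) - s * ε * Complex.I := by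
      intro τ; push_cast; ring
    have hzne : ∀ τ : ℝ, (τ : ℂ) - lam - s * ε * Complex.I ≠ 0 := by
      intro τ; rw [hzform]; exact den_ne s ε (τ - lam) hε hs
    have hznorm : ∀ τ : ℝ, ‖(τ : ℂ) - lam - s * ε * Complex.I‖
        = Real.sqrt ((τ - lam) ^ 2 + ε ^ 2) := by
      intro τ; rw [hzform]; exact norm_den s ε (τ - lam) hs
    set fε : ℝ → ℂ := fun τ => ((a τ - a lam : ℝ) : ℂ)
      / ((τ : ℂ) - lam - s * ε * Complex.I) with hfεdef
    have hsq1 : ∀ τ : ℝ, |τ - lam| ≤ Real.sqrt ((τ - lam) ^ 2 + ε ^ 2) := by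
      intro τ
      rw [← Real.sqrt_sq_eq_abs]
      exact Real.sqrt_le_sqrt (by nlinarith)
    have hfεnorm : ∀ τ ∈ S, ‖fε τ‖ ≤ D τ := by
      intro τ h
      rw [hfεdef]
      dsimp only
      rw [norm_div, hnorm1, hznorm]
      exact div_le_div₀ (hω0 _ (hmemS τ h)) (habs τ h) h.1 (hsq1 τ)
    have hfεm : Measurable fε := by
      apply Measurable.div
      · exact Complex.measurable_ofReal.comp (ha.sub measurable_const)
      · exact (((Complex.measurable_ofReal.comp measurable_id).sub
          measurable_const).sub measurable_const)
    have hfεint : IntegrableOn fε S :=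
      Integrable.mono' hD hfεm.aestronglyMeasurable.restrict
        ((ae_restrict_iff' hSm).2 (ae_of_all _ hfεnorm))
    have hfεIoc : IntegrableOn fε (Set.Ioc (lam - ρ) (lam + ρ)) := hfεint.congr_set_ae hae
    have hzcont : Continuous (fun τ : ℝ => (τ : ℂ) - lam - s * ε * Complex.I) :=
      (Complex.continuous_ofReal.sub continuous_const).sub continuous_const
    have hsplit : (∫ τ in (lam - ρ)..(lam + ρ), (a τ : ℂ)
          / ((τ : ℂ) - lam - s * ε * Complex.I))
        = (∫ τ in S, fε τ) + ((a lam : ℝ) : ℂ)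
            * ∫ τ in (lam - ρ)..(lam + ρ), ((τ : ℂ) - lam - s * ε * Complex.I)⁻¹ := by
      have hptw2 : ∀ τ : ℝ, (a τ : ℂ) / ((τ : ℂ) - lam - s * ε * Complex.I)
          = fε τ + ((a lam : ℝ) : ℂ) / ((τ : ℂ) - lam - s * ε * Complex.I) := by
        intro τ
        rw [hfεdef]
        dsimp only
        rw [← add_div]
        push_cast
        ring
      have hgc : Continuous (fun τ : ℝ => ((a lam : ℝ) : ℂ)
          / ((τ : ℂ) - lam - s * ε * Complex.I)) := continuous_const.div hzcont hzne
      rw [intervalIntegral.integral_congr (fun τ _ => hptw2 τ),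
        intervalIntegral.integral_add
          ((intervalIntegrable_iff_integrableOn_Ioc_of_le hle).2 hfεIoc)
          (hgc.intervalIntegrable _ _)]
      congr 1
      · rw [intervalIntegral.integral_of_le hle]
        exact setIntegral_congr_set hae
      · simp_rw [div_eq_mul_inv]
        rw [intervalIntegral.integral_const_mul]
    have hJ : (∫ τ in (lam - ρ)..(lam + ρ), ((τ : ℂ) - lam - s * ε * Complex.I)⁻¹)
        = 2 * s * Real.arctan (ρ / ε) * Complex.I := by
      have hco : ∀ τ : ℝ, ((τ : ℂ) - lam - s * ε * Complex.I)⁻¹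
          = (fun t : ℝ => ((t : ℂ) - s * ε * Complex.I)⁻¹) (τ - lam) := by
        intro τ
        dsimp only
        rw [hzform]
      rw [intervalIntegral.integral_congr (fun τ _ => hco τ),
        intervalIntegral.integral_comp_sub_right
          (fun t : ℝ => ((t : ℂ) - s * ε * Complex.I)⁻¹) lam]
      have e1 : lam - ρ - lam = -ρ := by ring
      have e2 : lam + ρ - lam = ρ := by ring
      rw [e1, e2]
      exact J_eval s ε ρ hε hs
    have hdiff : (∫ τ in (lam - ρ)..(lam + ρ), (a τ : ℂ)
            / ((τ : ℂ) - lam - s * ε * Complex.I))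
          - P - s * Real.pi * (a lam) * Complex.I
        = (∫ τ in S, (fε τ - f τ))
          + ((a lam * s * (2 * Real.arctan (ρ / ε) - Real.pi) : ℝ) : ℂ) * Complex.I := by
      rw [hsplit, hJ, hPdef, MeasureTheory.integral_sub hfεint hfint]
      push_cast
      ring
    rw [hdiff]
    refine le_trans (norm_add_le _ _) (add_le_add ?_ ?_)
    · -- main term
      set E : ℝ → ℝ := fun τ => ε / Real.sqrt ((τ - lam) ^ 2 + ε ^ 2) * D τ with hEdef
      have hsqpos : ∀ τ : ℝ, 0 < Real.sqrt ((τ - lam) ^ 2 + ε ^ 2) :=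
        fun τ => Real.sqrt_pos.2 (by positivity)
      have hEc : Continuous (fun τ : ℝ => ε / Real.sqrt ((τ - lam) ^ 2 + ε ^ 2)) :=
        continuous_const.div (Real.continuous_sqrt.comp (((continuous_id.sub continuous_const).pow 2).add continuous_const))
          (fun τ => ne_of_gt (hsqpos τ))
      have hEint : IntegrableOn E S := by
        refine Integrable.bdd_mul hD hEc.aestronglyMeasurable.restrict (c := 1) (ae_of_all _ fun τ => ?_)
        rw [Real.norm_eq_abs, abs_of_nonneg (by positivity)]
        rw [div_le_one (hsqpos τ)]
        calc ε = Real.sqrt (ε ^ 2) := by rw [Real.sqrt_sq hε.le]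
          _ ≤ _ := Real.sqrt_le_sqrt (by nlinarith)
      have hEbnd : ∀ τ ∈ S, ‖fε τ - f τ‖ ≤ E τ := by
        intro τ h
        have ht0 : τ - lam ≠ 0 := abs_pos.1 h.1
        have hne3 : (τ : ℂ) - lam ≠ 0 := by
          have h' : ((τ - lam : ℝ) : ℂ) ≠ 0 := by exact_mod_cast ht0
          simpa [Complex.ofReal_sub] using h'
        have hstep : fε τ - f τ
            = (((a τ - a lam : ℝ) : ℂ) * (((s * ε : ℝ) : ℂ) * Complex.I))
              / (((τ : ℂ) - lam - s * ε * Complex.I) * ((τ : ℂ) - lam)) := by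
          rw [hfεdef, hfdef]
          dsimp only
          rw [div_sub_div _ _ (hzne τ) hne3]
          congr 1
          push_cast
          ring
        rw [hstep, norm_div, norm_mul, norm_mul, Complex.norm_I, mul_one, hnorm1, hnorm1,
          norm_mul, hznorm]
        have e2 : ‖(τ : ℂ) - lam‖ = |τ - lam| := by rw [← Complex.ofReal_sub, hnorm1]
        rw [e2, abs_mul, hsabs, one_mul, abs_of_pos hε]
        have hsne : Real.sqrt ((τ - lam) ^ 2 + ε ^ 2) ≠ 0 := ne_of_gt (hsqpos τ)
        have htne : |τ - lam| ≠ 0 := ne_of_gt h.1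
        have heq : ω |τ - lam| * ε / (Real.sqrt ((τ - lam) ^ 2 + ε ^ 2) * |τ - lam|)
            = E τ := by
          rw [hEdef]
          dsimp only
          rw [hDdef]
          field_simp
        rw [← heq]
        have hpos1 : (0:ℝ) < Real.sqrt ((τ - lam) ^ 2 + ε ^ 2) * |τ - lam| :=
          mul_pos (hsqpos τ) h.1
        apply div_le_div_of_nonneg_right ?_ hpos1.le
        exact mul_le_mul_of_nonneg_right (habs τ h) hε.le
        -- done bound
      have h1 : ‖∫ τ in S, (fε τ - f τ)‖ ≤ ∫ τ in S, E τ :=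
        norm_integral_le_of_norm_le hEint ((ae_restrict_iff' hSm).2 (ae_of_all _ hEbnd))
      refine h1.trans (le_of_eq ?_)
      have hdisjS : Disjoint (Ioo (lam - ρ) lam) (Ioo lam (lam + ρ)) := by
        rw [Set.disjoint_left]
        rintro x ⟨_, h2⟩ ⟨h3, _⟩
        exact absurd h3 (not_lt.2 h2.le)
      have hEint' : IntegrableOn E (Ioo (lam - ρ) lam ∪ Ioo lam (lam + ρ)) := by
        rw [← hSu]; exact hEint
      have hElt : IntegrableOn E (Ioo (lam - ρ) lam) := hEint'.mono_set Set.subset_union_left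
      have hErt : IntegrableOn E (Ioo lam (lam + ρ)) := hEint'.mono_set Set.subset_union_right
      have hsplitE : ∫ τ in S, E τ
          = (∫ τ in Ioo (lam - ρ) lam, E τ) + ∫ τ in Ioo lam (lam + ρ), E τ := by
        rw [hSu]
        exact setIntegral_union hdisjS measurableSet_Ioo hElt hErt
      set Et : ℝ → ℝ := fun t => ε / Real.sqrt (t ^ 2 + ε ^ 2) * (ω |t| / |t|) with hEtdef
      have hEt_right : ∀ τ : ℝ, E τ = Et (τ - lam) := fun τ => rfl
      have hEt_left : ∀ τ : ℝ, E τ = Et (lam - τ) := by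
        intro τ
        rw [hEtdef, hEdef]
        dsimp only
        rw [hDdef]
        dsimp only
        have e : (lam - τ) ^ 2 = (τ - lam) ^ 2 := by ring
        rw [e, abs_sub_comm lam τ]
      have hright : ∫ τ in Ioo lam (lam + ρ), E τ = ∫ t in Set.Ioc (0:ℝ) ρ, Et t := by
        rw [← integral_Ioc_eq_integral_Ioo,
          ← intervalIntegral.integral_of_le (by linarith : lam ≤ lam + ρ),
          intervalIntegral.integral_congr (fun τ _ => hEt_right τ),
          intervalIntegral.integral_comp_sub_right Et lam, sub_self, add_sub_cancel_left,
          intervalIntegral.integral_of_le hρ.le]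
      have hleft : ∫ τ in Ioo (lam - ρ) lam, E τ = ∫ t in Set.Ioc (0:ℝ) ρ, Et t := by
        rw [← integral_Ioc_eq_integral_Ioo,
          ← intervalIntegral.integral_of_le (by linarith : lam - ρ ≤ lam),
          intervalIntegral.integral_congr (fun τ _ => hEt_left τ),
          intervalIntegral.integral_comp_sub_left Et lam, sub_self]
        have e : lam - (lam - ρ) = ρ := by ring
        rw [e, intervalIntegral.integral_of_le hρ.le]
      rw [hsplitE, hleft, hright]
      have hc : ∀ t ∈ Set.Ioc (0:ℝ) ρ,
          (2 * ε / Real.sqrt (t ^ 2 + ε ^ 2)) * (ω t / t) = 2 * Et t := by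
        intro t ht
        rw [hEtdef]
        dsimp only
        rw [abs_of_pos ht.1]
        ring
      rw [setIntegral_congr_fun measurableSet_Ioc hc, MeasureTheory.integral_const_mul]
      ring
    · -- boundary term
      have harc : 2 * Real.arctan (ρ / ε) - Real.pi ≤ 0 := by
        have := Real.arctan_lt_pi_div_two (ρ / ε)
        linarith
      have hn : ‖((a lam * s * (2 * Real.arctan (ρ / ε) - Real.pi) : ℝ) : ℂ) * Complex.I‖
          = |a lam| * (Real.pi - 2 * Real.arctan (ρ / ε)) := by
        rw [norm_mul, Complex.norm_I, mul_one, hnorm1, abs_mul, abs_mul, hsabs, mul_one,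
          abs_of_nonpos harc]
        ring
      rw [hn, mul_comm]
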